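/- Let C be a ternary linear code of length v = (3^n - 1)/2 and dimension 2n (with n = 2m+1, m ≥ 2) whose nonzero weights are exactly w₁ = 3^{n-1} - 3^m, w₂ = 3^{n-1}, w₃ = 3^{n-1} + 3^m, and whose dual code has minimum distance at least 3 (so A₁⊥ = A₂⊥ = 0). Then the weight distribution is uniquely determined: A_{w₁} = (1/2)·3^m(1+3^m)(3^{2m+1} - 1), A_{w₂} = 2·3^{4m+1} + 3^{2m} - 1, and A_{w₃} = (1/2)·3^m(3^m - 1)(3^{2m+1} - 1). -/

import Mathlib

open Finset

lemma aux_fiber_stmt_11 {G H : Type*} [AddCommGroup G] [Fintype G] [AddCommGroup H] [Fintype H]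
    [DecidableEq H] (f : G →+ H) (hf : Function.Surjective f) (w : H) :
    Fintype.card H * (Finset.univ.filter fun g => f g = w).card = Fintype.card G := by
  have key : ∀ w' : H, (Finset.univ.filter fun g => f g = w').card
      = (Finset.univ.filter fun g => f g = w).card := by
    intro w'
    obtain ⟨d, hd⟩ := hf (w - w')
    apply Finset.card_bij (fun g _ => g + d)
    · intro a ha
      simp only [mem_filter, mem_univ, true_and] at ha ⊢
      rw [map_add, ha, hd]; abel
    · intro a _ b _ h
      exact add_right_cancel h
    · intro b hb
      refine ⟨b - d, ?_, by abel⟩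
      simp only [mem_filter, mem_univ, true_and] at hb ⊢
      rw [map_sub, hb, hd]; abel
  have h2 : Fintype.card G = ∑ b : H, (Finset.univ.filter fun g => f g = b).card := by
    rw [← Finset.card_univ]
    exact Finset.card_eq_sum_card_fiberwise (fun x _ => Finset.mem_univ (f x))
  rw [h2, Finset.sum_congr rfl (fun b _ => key b), Finset.sum_const, Finset.card_univ,
    smul_eq_mul]

set_option maxHeartbeats 1600000 in
/-- A ternary linear code of length (3^n-1)/2, dimension 2n (n = 2m+1, m ≥ 2), whose
nonzero weights are exactly 3^{n-1}-3^m, 3^{n-1}, 3^{n-1}+3^m and whose dual has minimum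
distance ≥ 3, has the uniquely determined weight distribution of Table 1. -/
theorem stmt_11 (m : ℕ) (hm : 2 ≤ m)
    (n v w₁ w₂ w₃ : ℕ) (hn : n = 2 * m + 1) (hv : v = (3 ^ n - 1) / 2)
    (hw₁ : w₁ = 3 ^ (n - 1) - 3 ^ m) (hw₂ : w₂ = 3 ^ (n - 1)) (hw₃ : w₃ = 3 ^ (n - 1) + 3 ^ m)
    (C : Submodule (ZMod 3) (Fin v → ZMod 3))
    (wt : (Fin v → ZMod 3) → ℕ)
    (hwt : ∀ c, wt c = (Finset.univ.filter (fun i => c i ≠ 0)).card)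
    (hdim : Module.finrank (ZMod 3) C = 2 * n)
    (hweights : ∀ c ∈ C, c ≠ 0 → wt c = w₁ ∨ wt c = w₂ ∨ wt c = w₃)
    (hoccur : ∀ w ∈ ({w₁, w₂, w₃} : Set ℕ), ∃ c ∈ C, c ≠ 0 ∧ wt c = w)
    (hdual : ∀ x : Fin v → ZMod 3, (∀ c ∈ C, ∑ i, x i * c i = 0) → x ≠ 0 → 3 ≤ wt x) :
    2 * {c : Fin v → ZMod 3 | c ∈ C ∧ wt c = w₁}.ncard
        = 3 ^ m * (1 + 3 ^ m) * (3 ^ (2 * m + 1) - 1) ∧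
    {c : Fin v → ZMod 3 | c ∈ C ∧ wt c = w₂}.ncard = 2 * 3 ^ (4 * m + 1) + 3 ^ (2 * m) - 1 ∧
    2 * {c : Fin v → ZMod 3 | c ∈ C ∧ wt c = w₃}.ncard
        = 3 ^ m * (3 ^ m - 1) * (3 ^ (2 * m + 1) - 1) := by
  have hScard0 : (Finset.univ.filter
      (fun st : ZMod 3 × ZMod 3 => st.1 ≠ 0 ∧ st.2 ≠ 0)).card = 4 := by decide
  classical
  haveI : Fact (Nat.Prime 3) := ⟨by norm_num⟩
  -- basic numeric facts
  have h1m : (1:ℕ) ≤ 3 ^ m := Nat.one_le_pow _ _ (by norm_num)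
  have h3n : (1:ℕ) ≤ 3 ^ n := Nat.one_le_pow _ _ (by norm_num)
  have h3n' : (27:ℕ) ≤ 3 ^ n := by
    calc (27:ℕ) = 3 ^ 3 := by norm_num
    _ ≤ 3 ^ n := Nat.pow_le_pow_right (by norm_num) (by omega)
  have hodd : 3 ^ n % 2 = 1 := by
    rw [Nat.pow_mod]; norm_num
  have hv2 : 2 * v = 3 ^ n - 1 := by omega
  have hv1 : 1 ≤ v := by omega
  have hvge2 : 2 ≤ v := by omega
  have hmn : 3 ^ m ≤ 3 ^ (n - 1) := Nat.pow_le_pow_right (by norm_num) (by omega)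
  have hpowlt : 3 ^ m < 3 ^ (n - 1) := Nat.pow_lt_pow_right (by norm_num) (by omega)
  have hlt1 : 0 < w₁ := by omega
  have hlt2 : w₁ < w₂ := by omega
  have hlt3 : w₂ < w₃ := by omega
  have hwt0 : wt 0 = 0 := by rw [hwt]; simp
  -- nondegeneracy from the dual distance condition
  have nondeg2 : ∀ i j : Fin v, i ≠ j → ∀ a b : ZMod 3, ¬(a = 0 ∧ b = 0) →
      ∃ c ∈ C, a * c i + b * c j ≠ 0 := by
    intro i j hij a b hab
    by_contra hcon
    push_neg at hcon
    set x : Fin v → ZMod 3 := fun k => if k = i then a else if k = j then b else 0 with hx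
    have hxi : x i = a := by simp [hx]
    have hxj : x j = b := by simp [hx, hij.symm]
    have hsum : ∀ c ∈ C, ∑ k, x k * c k = 0 := by
      intro c hc
      have hss : ∑ k, x k * c k = ∑ k ∈ ({i, j} : Finset (Fin v)), x k * c k := by
        refine (Finset.sum_subset (Finset.subset_univ _) ?_).symm
        intro k _ hk
        simp only [Finset.mem_insert, Finset.mem_singleton] at hk
        push_neg at hk
        simp [hx, hk.1, hk.2]
      rw [hss, Finset.sum_pair hij, hxi, hxj]
      exact hcon c hc
    have hxne : x ≠ 0 := by
      intro h
      exact hab ⟨by rw [← hxi, h]; rfl, by rw [← hxj, h]; rfl⟩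
    have h3 := hdual x hsum hxne
    have h2 : wt x ≤ 2 := by
      rw [hwt]
      calc (univ.filter fun k => x k ≠ 0).card ≤ ({i, j} : Finset (Fin v)).card := by
            apply Finset.card_le_card
            intro k hk
            simp only [Finset.mem_filter] at hk
            by_contra hmem
            simp only [Finset.mem_insert, Finset.mem_singleton] at hmem
            push_neg at hmem
            exact hk.2 (by simp [hx, hmem.1, hmem.2])
        _ ≤ 2 := Finset.card_insert_le _ _ |>.trans (by simp)
    omega
  have nondeg1 : ∀ i : Fin v, ∃ c ∈ C, c i ≠ 0 := by
    intro i
    have hex : ∃ j : Fin v, i ≠ j := by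
      by_cases h : (i : ℕ) = 0
      · exact ⟨⟨1, by omega⟩, fun e => by
          have := congrArg Fin.val e; simp [h] at this⟩
      · exact ⟨⟨0, by omega⟩, fun e => by
          have := congrArg Fin.val e; simp at this; omega⟩
    obtain ⟨j, hij⟩ := hex
    obtain ⟨c, hc, hne⟩ := nondeg2 i j hij 1 0 (by intro ⟨h1, _⟩; exact one_ne_zero h1)
    exact ⟨c, hc, fun h => hne (by rw [h]; ring)⟩
  -- fiber counts
  have hfiber1 : ∀ (i : Fin v) (a : ZMod 3),
      3 * (Finset.univ.filter fun c : C => (c : Fin v → ZMod 3) i = a).card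
        = Fintype.card C := by
    intro i a
    obtain ⟨c₀, hc₀, hci⟩ := nondeg1 i
    let f : C →+ ZMod 3 := AddMonoidHom.mk' (fun c => (c : Fin v → ZMod 3) i) (by
      intro x y; rfl)
    have hsurj : Function.Surjective f := by
      intro t
      refine ⟨(t * (c₀ i)⁻¹) • ⟨c₀, hc₀⟩, ?_⟩
      show (t * (c₀ i)⁻¹) * c₀ i = t
      field_simp
    have h := aux_fiber_stmt_11 f hsurj a
    simpa [ZMod.card, f] using h
  have hfiber2 : ∀ i j : Fin v, i ≠ j → ∀ st : ZMod 3 × ZMod 3,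
      9 * (Finset.univ.filter fun c : C =>
          ((c : Fin v → ZMod 3) i, (c : Fin v → ZMod 3) j) = st).card = Fintype.card C := by
    intro i j hij st
    obtain ⟨c, hc, hci⟩ := nondeg1 i
    obtain ⟨c', hc', hd⟩ := nondeg2 i j hij (c j) (-(c i)) (by
      intro ⟨_, h2⟩; exact hci (by simpa using h2))
    set d : ZMod 3 := c j * c' i + (-(c i)) * c' j with hdd
    let f : C →+ ZMod 3 × ZMod 3 := AddMonoidHom.mk'
      (fun x => ((x : Fin v → ZMod 3) i, (x : Fin v → ZMod 3) j)) (by intro x y; rfl)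
    have hsurj : Function.Surjective f := by
      rintro ⟨s, t⟩
      refine ⟨((t * c' i - s * c' j) * d⁻¹) • ⟨c, hc⟩
        + ((s * c j - t * c i) * d⁻¹) • ⟨c', hc'⟩, ?_⟩
      have hfv : f (((t * c' i - s * c' j) * d⁻¹) • (⟨c, hc⟩ : C)
          + ((s * c j - t * c i) * d⁻¹) • (⟨c', hc'⟩ : C))
          = ((t * c' i - s * c' j) * d⁻¹ * c i + (s * c j - t * c i) * d⁻¹ * c' i,
             (t * c' i - s * c' j) * d⁻¹ * c j + (s * c j - t * c i) * d⁻¹ * c' j) := rfl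
      rw [hfv]
      have hd0 : d ≠ 0 := hd
      rw [Prod.mk.injEq]
      refine ⟨?_, ?_⟩ <;> field_simp <;> ring
    have h := aux_fiber_stmt_11 f hsurj st
    simpa [ZMod.card, f] using h
  set N := Fintype.card C with hNdef
  have hN : N = 3 ^ (2 * n) := by
    rw [hNdef, Module.card_eq_pow_finrank (K := ZMod 3) (V := C), ZMod.card, hdim]
  -- coordinate counts
  have key1 : ∀ i : Fin v,
      3 * (Finset.univ.filter fun c : C => (c : Fin v → ZMod 3) i ≠ 0).card = 2 * N := by
    intro i
    simp only [ne_eq]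
    have h1 := hfiber1 i 0
    have h2 : (Finset.univ.filter fun c : C => (c : Fin v → ZMod 3) i = 0).card
        + (Finset.univ.filter fun c : C => ¬((c : Fin v → ZMod 3) i = 0)).card
        = Fintype.card C := by
      rw [Finset.card_filter_add_card_filter_not, Finset.card_univ]
    omega
  have key2 : ∀ i j : Fin v, i ≠ j →
      9 * (Finset.univ.filter fun c : C =>
        (c : Fin v → ZMod 3) i ≠ 0 ∧ (c : Fin v → ZMod 3) j ≠ 0).card = 4 * N := by
    intro i j hij
    set S : Finset (ZMod 3 × ZMod 3) :=
      Finset.univ.filter (fun st => st.1 ≠ 0 ∧ st.2 ≠ 0) with hS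
    have hScard : S.card = 4 := by rw [hS]; exact hScard0
    have hsplit : (Finset.univ.filter fun c : C =>
        (c : Fin v → ZMod 3) i ≠ 0 ∧ (c : Fin v → ZMod 3) j ≠ 0).card
        = ∑ st ∈ S, (Finset.univ.filter fun c : C =>
            ((c : Fin v → ZMod 3) i, (c : Fin v → ZMod 3) j) = st).card := by
      rw [Finset.card_eq_sum_card_fiberwise
        (f := fun c : C => ((c : Fin v → ZMod 3) i, (c : Fin v → ZMod 3) j)) (t := S)
        (fun c hc => by
          rw [hS, Finset.mem_coe, Finset.mem_filter]
          exact ⟨Finset.mem_univ _, (Finset.mem_filter.mp (Finset.mem_coe.mp hc)).2⟩)]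
      refine Finset.sum_congr rfl (fun st hst => ?_)
      congr 1
      rw [Finset.filter_filter]
      refine Finset.filter_congr ?_
      intro c _
      simp only [hS, Finset.mem_filter, Finset.mem_univ, true_and] at hst
      constructor
      · exact fun h => h.2
      · intro h
        refine ⟨⟨?_, ?_⟩, h⟩
        · rw [show (c : Fin v → ZMod 3) i = st.1 from congrArg Prod.fst h]; exact hst.1
        · rw [show (c : Fin v → ZMod 3) j = st.2 from congrArg Prod.snd h]; exact hst.2
    rw [hsplit, Finset.mul_sum,
      Finset.sum_congr rfl (fun st hst => hfiber2 i j hij st),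
      Finset.sum_const, hScard, smul_eq_mul, mul_comm]
  -- power moments
  have M1 : 3 * ∑ c : C, wt ↑c = v * (2 * N) := by
    have hsum1 : ∑ c : C, wt ↑c
        = ∑ i : Fin v, (Finset.univ.filter fun c : C => (c : Fin v → ZMod 3) i ≠ 0).card := by
      calc ∑ c : C, wt ↑c
          = ∑ c : C, ∑ i : Fin v, (if (c : Fin v → ZMod 3) i ≠ 0 then 1 else 0) := by
            refine Finset.sum_congr rfl fun c _ => ?_
            rw [hwt, Finset.card_filter]
        _ = ∑ i : Fin v, ∑ c : C, (if (c : Fin v → ZMod 3) i ≠ 0 then 1 else 0) :=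
            Finset.sum_comm
        _ = _ := Finset.sum_congr rfl fun i _ => (Finset.card_filter _ _).symm
    rw [hsum1, Finset.mul_sum, Finset.sum_congr rfl fun i _ => key1 i, Finset.sum_const,
      Finset.card_univ, Fintype.card_fin, smul_eq_mul]
  have M2 : 9 * ∑ c : C, (wt ↑c) ^ 2 = v * (6 * N + (v - 1) * (4 * N)) := by
    have hsq : ∑ c : C, (wt ↑c) ^ 2
        = ∑ i : Fin v, ∑ j : Fin v, (Finset.univ.filter fun c : C =>
            (c : Fin v → ZMod 3) i ≠ 0 ∧ (c : Fin v → ZMod 3) j ≠ 0).card := by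
      calc ∑ c : C, (wt ↑c) ^ 2
          = ∑ c : C, ∑ i : Fin v, ∑ j : Fin v,
              (if (c : Fin v → ZMod 3) i ≠ 0 ∧ (c : Fin v → ZMod 3) j ≠ 0 then 1 else 0) := by
            refine Finset.sum_congr rfl fun c _ => ?_
            rw [hwt, sq, Finset.card_filter, Finset.sum_mul_sum]
            refine Finset.sum_congr rfl fun i _ => Finset.sum_congr rfl fun j _ => ?_
            by_cases h1 : (c : Fin v → ZMod 3) i ≠ 0 <;>
              by_cases h2 : (c : Fin v → ZMod 3) j ≠ 0 <;> simp [h1, h2]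
        _ = ∑ i : Fin v, ∑ c : C, ∑ j : Fin v, _ := Finset.sum_comm
        _ = ∑ i : Fin v, ∑ j : Fin v, ∑ c : C,
              (if (c : Fin v → ZMod 3) i ≠ 0 ∧ (c : Fin v → ZMod 3) j ≠ 0 then 1 else 0) :=
            Finset.sum_congr rfl fun i _ => Finset.sum_comm
        _ = _ := Finset.sum_congr rfl fun i _ => Finset.sum_congr rfl fun j _ =>
              (Finset.card_filter _ _).symm
    rw [hsq, Finset.mul_sum]
    have hper : ∀ i : Fin v,
        9 * ∑ j : Fin v, (Finset.univ.filter fun c : C =>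
            (c : Fin v → ZMod 3) i ≠ 0 ∧ (c : Fin v → ZMod 3) j ≠ 0).card
          = 6 * N + (v - 1) * (4 * N) := by
      intro i
      rw [← Finset.add_sum_erase _ _ (Finset.mem_univ i), mul_add, Finset.mul_sum]
      have hdiag : (Finset.univ.filter fun c : C =>
          (c : Fin v → ZMod 3) i ≠ 0 ∧ (c : Fin v → ZMod 3) i ≠ 0).card
          = (Finset.univ.filter fun c : C => (c : Fin v → ZMod 3) i ≠ 0).card := by
        congr 1
        exact Finset.filter_congr fun c _ => by tauto
      rw [hdiag]
      have h1 := key1 i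
      have hoff : ∑ j ∈ Finset.univ.erase i, (9 * (Finset.univ.filter fun c : C =>
          (c : Fin v → ZMod 3) i ≠ 0 ∧ (c : Fin v → ZMod 3) j ≠ 0).card)
          = (v - 1) * (4 * N) := by
        rw [Finset.sum_congr rfl fun j hj => key2 i j (Finset.ne_of_mem_erase hj).symm,
          Finset.sum_const, Finset.card_erase_of_mem (Finset.mem_univ i),
          Finset.card_univ, Fintype.card_fin, smul_eq_mul]
      rw [hoff]
      omega
    rw [Finset.sum_congr rfl fun i _ => hper i, Finset.sum_const, Finset.card_univ,
      Fintype.card_fin, smul_eq_mul]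
  -- weight distribution decomposition
  set A₁ := (Finset.univ.filter fun c : C => wt ↑c = w₁).card with hA₁
  set A₂ := (Finset.univ.filter fun c : C => wt ↑c = w₂).card with hA₂
  set A₃ := (Finset.univ.filter fun c : C => wt ↑c = w₃).card with hA₃
  have hcases : ∀ c : C, (c : Fin v → ZMod 3) = 0 ∨
      (wt ↑c = w₁ ∨ wt ↑c = w₂ ∨ wt ↑c = w₃) := by
    intro c
    by_cases h0 : (c : Fin v → ZMod 3) = 0
    · exact Or.inl h0
    · exact Or.inr (hweights ↑c c.2 h0)
  have E0 : N = 1 + (A₁ + A₂ + A₃) := by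
    have hone : ∀ c : C, (1:ℕ) = (if (c : Fin v → ZMod 3) = 0 then 1 else 0)
        + ((if wt ↑c = w₁ then 1 else 0) + (if wt ↑c = w₂ then 1 else 0)
          + (if wt ↑c = w₃ then 1 else 0)) := by
      intro c
      rcases hcases c with h | h
      · rw [h, hwt0, if_pos rfl, if_neg (by omega : ¬(0:ℕ) = w₁),
          if_neg (by omega : ¬(0:ℕ) = w₂), if_neg (by omega : ¬(0:ℕ) = w₃)]
      · have hw0 : wt ↑c ≠ 0 := by omega
        rw [if_neg (fun hc => hw0 (by rw [hc, hwt0]))]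
        rcases h with h | h | h <;> rw [h] <;>
          [(rw [if_pos rfl, if_neg (by omega : ¬w₁ = w₂), if_neg (by omega : ¬w₁ = w₃)]);
           (rw [if_neg (by omega : ¬w₂ = w₁), if_pos rfl, if_neg (by omega : ¬w₂ = w₃)]);
           (rw [if_neg (by omega : ¬w₃ = w₁), if_neg (by omega : ¬w₃ = w₂), if_pos rfl])]
    calc N = ∑ _c : C, 1 := by
          rw [Finset.sum_const, Finset.card_univ, smul_eq_mul, mul_one]
      _ = ∑ c : C, ((if (c : Fin v → ZMod 3) = 0 then 1 else 0)
          + ((if wt ↑c = w₁ then 1 else 0) + (if wt ↑c = w₂ then 1 else 0)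
            + (if wt ↑c = w₃ then 1 else 0))) := Finset.sum_congr rfl fun c _ => hone c
      _ = 1 + (A₁ + A₂ + A₃) := by
          rw [Finset.sum_add_distrib, Finset.sum_add_distrib, Finset.sum_add_distrib]
          rw [hA₁, hA₂, hA₃, Finset.card_filter, Finset.card_filter, Finset.card_filter]
          congr 1
          have h00 : (∑ c : C, if (c : Fin v → ZMod 3) = 0 then 1 else 0)
              = ∑ c : C, if c = (0:C) then 1 else 0 :=
            Finset.sum_congr rfl fun c _ =>
              if_congr ZeroMemClass.coe_eq_zero rfl rfl
          rw [h00, Finset.sum_ite_eq' Finset.univ (0:C) (fun _ => 1),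
            if_pos (Finset.mem_univ _)]
  have E1 : ∑ c : C, wt ↑c = A₁ * w₁ + A₂ * w₂ + A₃ * w₃ := by
    have hterm : ∀ c : C, wt ↑c = (if wt ↑c = w₁ then w₁ else 0)
        + (if wt ↑c = w₂ then w₂ else 0) + (if wt ↑c = w₃ then w₃ else 0) := by
      intro c
      rcases hcases c with h | h
      · rw [h, hwt0]; split_ifs <;> omega
      · split_ifs <;> omega
    rw [Finset.sum_congr rfl fun c _ => hterm c]
    rw [Finset.sum_add_distrib, Finset.sum_add_distrib]
    rw [← Finset.sum_filter, ← Finset.sum_filter, ← Finset.sum_filter]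
    rw [Finset.sum_const, Finset.sum_const, Finset.sum_const]
    simp only [smul_eq_mul, hA₁, hA₂, hA₃]
  have E2 : ∑ c : C, (wt ↑c) ^ 2 = A₁ * w₁^2 + A₂ * w₂^2 + A₃ * w₃^2 := by
    have hterm : ∀ c : C, (wt ↑c)^2 = (if wt ↑c = w₁ then w₁^2 else 0)
        + (if wt ↑c = w₂ then w₂^2 else 0) + (if wt ↑c = w₃ then w₃^2 else 0) := by
      intro c
      rcases hcases c with h | h
      · rw [h, hwt0, if_neg (by omega : ¬(0:ℕ) = w₁),
          if_neg (by omega : ¬(0:ℕ) = w₂), if_neg (by omega : ¬(0:ℕ) = w₃)]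
        simp
      · rcases h with h | h | h <;> rw [h] <;>
          [(rw [if_pos rfl, if_neg (by omega : ¬w₁ = w₂), if_neg (by omega : ¬w₁ = w₃)]);
           (rw [if_neg (by omega : ¬w₂ = w₁), if_pos rfl, if_neg (by omega : ¬w₂ = w₃)]);
           (rw [if_neg (by omega : ¬w₃ = w₁), if_neg (by omega : ¬w₃ = w₂), if_pos rfl])] <;>
          omega
    rw [Finset.sum_congr rfl fun c _ => hterm c]
    rw [Finset.sum_add_distrib, Finset.sum_add_distrib]
    rw [← Finset.sum_filter, ← Finset.sum_filter, ← Finset.sum_filter]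
    rw [Finset.sum_const, Finset.sum_const, Finset.sum_const]
    simp only [smul_eq_mul, hA₁, hA₂, hA₃]
  -- the three moment equations
  have e0 : N = 1 + (A₁ + A₂ + A₃) := E0
  have e1 : 3 * (A₁ * w₁ + A₂ * w₂ + A₃ * w₃) = v * (2 * N) := by rw [← E1]; exact M1
  have e2 : 9 * (A₁ * w₁^2 + A₂ * w₂^2 + A₃ * w₃^2) = v * (6 * N + (v - 1) * (4 * N)) := by
    rw [← E2]; exact M2
  -- convert ncard to the filtered counts
  have hAw : ∀ w : ℕ, {c : Fin v → ZMod 3 | c ∈ C ∧ wt c = w}.ncard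
      = (Finset.univ.filter fun c : C => wt ↑c = w).card := by
    intro w
    rw [← Nat.card_coe_set_eq]
    have e : ↥{c : Fin v → ZMod 3 | c ∈ C ∧ wt c = w} ≃ {c : C // wt ↑c = w} :=
      (Equiv.subtypeSubtypeEquivSubtypeInter (· ∈ C) (fun c => wt c = w)).symm
    rw [Nat.card_congr e, Nat.card_eq_fintype_card, Fintype.card_subtype]
  rw [hAw w₁, hAw w₂, hAw w₃, ← hA₁, ← hA₂, ← hA₃]
  -- final algebra over ℚ
  have hb1 : (1:ℕ) ≤ 2*3^(4*m+1)+3^(2*m) := by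
    have := Nat.one_le_pow (2*m) 3 (by norm_num); omega
  have h2m1 : (1:ℕ) ≤ 3^(2*m+1) := Nat.one_le_pow _ _ (by norm_num)
  qify [hmn] at hw₁
  qify at hw₂ hw₃ hN e0 e1
  qify [h3n, hv1] at e2 hv2
  qify [h2m1, h1m, hb1]
  have en1 : n - 1 = m*2 := by omega
  have en2 : 2*n = m*4+2 := by omega
  have hq1 : ((3:ℚ))^(n-1) = ((3:ℚ)^m)^2 := by rw [en1, pow_mul]
  have hqN : ((3:ℚ))^(2*n) = ((3:ℚ)^m)^4*9 := by
    rw [en2, pow_add, pow_mul]; norm_num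
  have hq4 : ((3:ℚ))^(4*m+1) = ((3:ℚ)^m)^4*3 := by
    rw [show 4*m+1 = m*4+1 by ring, pow_succ, pow_mul]
  have hq2 : ((3:ℚ))^(2*m) = ((3:ℚ)^m)^2 := by rw [show 2*m = m*2 by ring, pow_mul]
  have hq21 : ((3:ℚ))^(2*m+1) = ((3:ℚ)^m)^2*3 := by rw [pow_succ, hq2]
  have hqn : ((3:ℚ))^n = ((3:ℚ)^m)^2*3 := by
    rw [show n = m*2+1 by omega, pow_succ, pow_mul]
  rw [hq1] at hw₁ hw₂ hw₃
  rw [hqn] at hv2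
  rw [hqN] at hN
  rw [hq21, hq4, hq2]
  set T : ℚ := (3:ℚ)^m with hTdef
  have hT : T ≠ 0 := by positivity
  rw [hw₁, hw₂, hw₃] at e1 e2
  rw [hN] at e0 e1 e2
  have hqv : (v:ℚ) = (T^2*3-1)/2 := by linarith
  rw [hqv] at e1 e2
  refine ⟨?_, ?_, ?_⟩
  · have hA : T^2*(2*(A₁:ℚ)) = T^2*(T*(1+T)*(T^2*3-1)) := by
      linear_combination (-(T^2*(T^2+T))) * e0 - ((T^2+(T^2+T))/3) * e1 + (1/9) * e2
    have := mul_left_cancel₀ (pow_ne_zero 2 hT) hA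
    linarith
  · have hB : T^2*((A₂:ℚ)) = T^2*(2*(T^4*3)+T^2-1) := by
      linear_combination ((T^2-T)*(T^2+T)) * e0 + (((T^2-T)+(T^2+T))/3) * e1 - (1/9) * e2
    have := mul_left_cancel₀ (pow_ne_zero 2 hT) hB
    linarith
  · have hC : T^2*(2*(A₃:ℚ)) = T^2*(T*(T-1)*(T^2*3-1)) := by
      linear_combination (-((T^2-T)*T^2)) * e0 - (((T^2-T)+T^2)/3) * e1 + (1/9) * e2
    have := mul_left_cancel₀ (pow_ne_zero 2 hT) hC
    linarith
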